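/- Let G = (V,E) be a finite simple graph with n vertices. Then c-rk(G) + c-rk(Ḡ) < √2 · n + 1, where Ḡ is the complement graph. -/

import Mathlib

/-- `St(W)`: the set of vertices adjacent to every vertex of `W` (so `St(∅) = V`). -/
def starW {V : Type*} (G : SimpleGraph V) (W : Set V) : Set V := {v | ∀ w ∈ W, G.Adj v w}

/-- The flats of `G`: all sets of the form `St(W)`, `W ⊆ V`. -/
def flats {V : Type*} (G : SimpleGraph V) : Set (Set V) := {X | ∃ W : Set V, X = starW G W}

/-- Height of a family of sets: the largest `k` admitting a strictly decreasing chain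
`X₀ ⊃ X₁ ⊃ … ⊃ X_k` inside the family. -/
noncomputable def heightOf {V : Type*} (F : Set (Set V)) : ℕ :=
  sSup {k | ∃ c : Fin (k + 1) → Set V, StrictAnti c ∧ ∀ i, c i ∈ F}

/-- The c-rank of a graph: the height of its lattice of flats. -/
noncomputable def crk {V : Type*} (G : SimpleGraph V) : ℕ := heightOf (flats G)

/-- `J` has a witness in `A_G^c`: there is an equal-size row set such that the corresponding
submatrix of the complemented adjacency matrix can be put in lower unitriangular form
(1's on the diagonal, 0's above) by independently permuting rows and columns. -/
def hasWitness {V : Type*} (G : SimpleGraph V) (J : Finset V) : Prop :=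
  ∃ i : Fin J.card → V, ∃ j : Fin J.card → V,
    Function.Injective i ∧ Function.Injective j ∧ (∀ r, j r ∈ J) ∧
    (∀ r, ¬ G.Adj (i r) (j r)) ∧ (∀ r s, r < s → G.Adj (i r) (j s))

/-- The c-rank of `G` defined via witnesses: maximum size of a vertex subset with a witness. -/
noncomputable def crkW {V : Type*} (G : SimpleGraph V) : ℕ :=
  sSup {k | ∃ J : Finset V, J.card = k ∧ hasWitness G J}

open Finset

/-- Witness data of size `a` forces at least `a(a-1)/2` edges. -/
lemma witness_edges {V : Type*} [Fintype V] [DecidableEq V] (G : SimpleGraph V)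
    [DecidableRel G.Adj] {a : ℕ} (i j : Fin a → V)
    (hij : ∀ r, ¬ G.Adj (i r) (j r))
    (hadj : ∀ r s : Fin a, r < s → G.Adj (i r) (j s)) :
    a * (a - 1) ≤ 2 * G.edgeFinset.card := by
  have hi : Function.Injective i := by
    intro r s h
    by_contra hne
    rcases lt_or_gt_of_ne hne with hlt | hlt
    · have := hadj r s hlt; rw [h] at this; exact hij s this
    · have := hadj s r hlt; rw [← h] at this; exact hij r this
  have hj : Function.Injective j := by
    intro r s h
    by_contra hne
    rcases lt_or_gt_of_ne hne with hlt | hlt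
    · have := hadj r s hlt; rw [← h] at this; exact hij r this
    · have := hadj s r hlt; rw [h] at this; exact hij s this
  set S : Finset (Fin a × Fin a) := univ.filter (fun p => p.1 < p.2) with hS
  have hcard : S.card ≤ G.edgeFinset.card := by
    apply Finset.card_le_card_of_injOn (fun p => s(i p.1, j p.2))
    · intro p hp
      simp only [hS, mem_coe, mem_filter, mem_univ, true_and] at hp
      simpa [SimpleGraph.mem_edgeFinset] using hadj _ _ hp
    · intro p hp q hq hpq
      simp only [hS, coe_filter, Set.mem_setOf_eq, mem_univ, true_and] at hp hq
      rw [Sym2.eq_iff] at hpq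
      rcases hpq with ⟨h1, h2⟩ | ⟨h1, h2⟩
      · exact Prod.ext (hi h1) (hj h2)
      · exfalso
        have hq2p1 : q.2 ≤ p.1 := by
          by_contra hlt
          push_neg at hlt
          have := hadj p.1 q.2 hlt
          rw [← h1] at this
          exact G.irrefl this
        have hp2q1 : p.2 ≤ q.1 := by
          by_contra hlt
          push_neg at hlt
          have := hadj q.1 p.2 hlt
          rw [← h2] at this
          exact G.irrefl this
        exact lt_asymm hq ((hq2p1.trans_lt hp).trans_le hp2q1)
  have hScard : 2 * S.card = a * (a - 1) := by
    have : S.card = ∑ y : Fin a, (y : ℕ) := by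
      rw [Finset.card_eq_sum_card_fiberwise (f := fun p : Fin a × Fin a => p.2)
        (t := univ) (fun x _ => mem_univ _)]
      refine Finset.sum_congr rfl fun y _ => ?_
      rw [← Fin.card_Iio (b := y)]
      apply Finset.card_nbij (fun p => p.1)
      · intro p hp
        simp only [hS, mem_coe, mem_filter, mem_univ, true_and] at hp
        rw [Finset.mem_coe, Finset.mem_Iio, ← hp.2]
        exact hp.1
      · intro p hp q hq hpq
        simp only [hS, coe_filter, Set.mem_setOf_eq, mem_univ, true_and] at hp hq
        exact Prod.ext hpq (hp.2.trans hq.2.symm)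
      · intro x hx
        simp only [coe_Iio, Set.mem_Iio] at hx
        refine ⟨(x, y), ?_, rfl⟩
        simp [hS, hx]
    have h2 : (∑ y : Fin a, (y : ℕ)) * 2 = a * (a - 1) := by
      rw [Fin.sum_univ_eq_sum_range (fun i => i) a]
      exact Finset.sum_range_id_mul_two a
    omega
  omega

/-- A strictly decreasing chain of subsets of a finite type has length at most the cardinality. -/
lemma chain_bound {V : Type*} [Fintype V] {k : ℕ}
    (c : Fin (k + 1) → Set V) (hc : StrictAnti c) : k ≤ Fintype.card V := by
  classical
  set g : Fin (k + 1) → ℕ := fun i => (c i).ncard with hg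
  have hganti : StrictAnti g := by
    intro x y hxy
    exact Set.ncard_lt_ncard (hc hxy) (Set.toFinite _)
  have hginj : Function.Injective g := hganti.injective
  have hgle : ∀ x, g x ≤ Fintype.card V := by
    intro x
    simpa [Set.ncard_univ] using Set.ncard_le_ncard (Set.subset_univ (c x)) Set.finite_univ
  have h1 : (univ.image g).card = k + 1 := by
    rw [Finset.card_image_of_injective _ hginj, card_univ, Fintype.card_fin]
  have h2 : univ.image g ⊆ Finset.range (Fintype.card V + 1) := by
    intro x hx
    simp only [mem_image] at hx
    obtain ⟨y, _, rfl⟩ := hx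
    simp [Nat.lt_succ_iff, hgle y]
  have := Finset.card_le_card h2
  rw [h1, Finset.card_range] at this
  omega

/-- The c-rank is attained by a chain of flats. -/
lemma crk_mem {V : Type*} [Fintype V] (G : SimpleGraph V) :
    ∃ c : Fin (crk G + 1) → Set V, StrictAnti c ∧ ∀ i, c i ∈ flats G := by
  have hne : {k | ∃ c : Fin (k + 1) → Set V, StrictAnti c ∧ ∀ i, c i ∈ flats G}.Nonempty := by
    refine ⟨0, fun _ => starW G ∅, ?_, fun i => ⟨∅, rfl⟩⟩
    intro x y hxy
    have hx := x.isLt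
    have hy := y.isLt
    have := Fin.lt_def.mp hxy
    omega
  have hbdd : BddAbove {k | ∃ c : Fin (k + 1) → Set V, StrictAnti c ∧ ∀ i, c i ∈ flats G} := by
    refine ⟨Fintype.card V, fun k hk => ?_⟩
    obtain ⟨c, hc, _⟩ := hk
    exact chain_bound c hc
  have := Nat.sSup_mem hne hbdd
  exact this

lemma crk_le_card {V : Type*} [Fintype V] (G : SimpleGraph V) : crk G ≤ Fintype.card V := by
  obtain ⟨c, hc, _⟩ := crk_mem G
  exact chain_bound c hc

/-- From a chain of flats attaining the c-rank one extracts unitriangular witness data. -/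
lemma crk_witness {V : Type*} [Fintype V] (G : SimpleGraph V) :
    ∃ i j : Fin (crk G) → V, (∀ r, ¬ G.Adj (i r) (j r)) ∧
      (∀ r s : Fin (crk G), r < s → G.Adj (i r) (j s)) := by
  obtain ⟨c, hc, hf⟩ := crk_mem G
  have hW : ∀ r : Fin (crk G), ∃ W : Set V, c r.succ = starW G W := fun r => hf r.succ
  choose W hWc using hW
  have hjex : ∀ r : Fin (crk G), ∃ x, x ∈ c (Fin.castSucc r) ∧ x ∉ c r.succ := by
    intro r
    have : c r.succ < c (Fin.castSucc r) := hc (Fin.castSucc_lt_succ : Fin.castSucc r < r.succ)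
    obtain ⟨x, hx1, hx2⟩ := Set.exists_of_ssubset this
    exact ⟨x, hx1, hx2⟩
  choose j hj1 hj2 using hjex
  have hiex : ∀ r : Fin (crk G), ∃ w, w ∈ W r ∧ ¬ G.Adj (j r) w := by
    intro r
    have := hj2 r
    rw [hWc r] at this
    rw [starW, Set.mem_setOf_eq] at this
    push_neg at this
    exact this
  choose i hi1 hi2 using hiex
  refine ⟨i, j, fun r h => hi2 r h.symm, fun r s hrs => ?_⟩
  have hmem : j s ∈ c r.succ := by
    have hle : r.succ ≤ Fin.castSucc s := by
      rw [Fin.le_def]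
      rw [Fin.lt_def] at hrs
      simpa using hrs
    exact hc.antitone hle (hj1 s)
  rw [hWc r] at hmem
  exact (hmem (i r) (hi1 r)).symm

lemma cast_mul_pred (k : ℕ) : ((k * (k - 1) : ℕ) : ℝ) = (k : ℝ) * ((k : ℝ) - 1) := by
  cases k with
  | zero => simp
  | succ m => push_cast [Nat.succ_sub_one]; ring

/-- For a finite simple graph `G` with `n` vertices,
`c-rk G + c-rk Ḡ < √2 · n + 1`, where `Ḡ` is the complement graph. -/
theorem crk_add_crk_compl_lt {V : Type*} [Fintype V] (G : SimpleGraph V) :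
    (crk G : ℝ) + (crk Gᶜ : ℝ) < Real.sqrt 2 * (Fintype.card V : ℝ) + 1 := by
  classical
  set n := Fintype.card V with hn
  set a := crk G with ha
  set b := crk Gᶜ with hb
  -- edge counts
  obtain ⟨i₁, j₁, hij₁, hadj₁⟩ := crk_witness G
  obtain ⟨i₂, j₂, hij₂, hadj₂⟩ := crk_witness Gᶜ
  have hEG : a * (a - 1) ≤ 2 * G.edgeFinset.card := witness_edges G i₁ j₁ hij₁ hadj₁
  have hEG' : b * (b - 1) ≤ 2 * Gᶜ.edgeFinset.card := witness_edges Gᶜ i₂ j₂ hij₂ hadj₂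
  have hdisj : Disjoint G.edgeFinset Gᶜ.edgeFinset :=
    SimpleGraph.disjoint_edgeFinset.mpr disjoint_compl_right
  have hsup : (G ⊔ Gᶜ).edgeFinset = G.edgeFinset ∪ Gᶜ.edgeFinset :=
    SimpleGraph.edgeFinset_sup
  have h1 : G.edgeFinset.card + Gᶜ.edgeFinset.card ≤ n.choose 2 := by
    rw [← Finset.card_union_of_disjoint hdisj, ← hsup]
    exact SimpleGraph.card_edgeFinset_le_card_choose_two
  have h2 : n.choose 2 * 2 = n * (n - 1) := by
    rw [Nat.choose_two_right, Nat.div_mul_cancel (Nat.even_mul_pred_self _).two_dvd]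
  have hnat : a * (a - 1) + b * (b - 1) ≤ n * (n - 1) := by omega
  rcases Nat.eq_zero_or_pos n with h0 | hpos
  · have haz : a = 0 := Nat.le_zero.mp (h0 ▸ crk_le_card G)
    have hbz : b = 0 := Nat.le_zero.mp (h0 ▸ crk_le_card Gᶜ)
    rw [haz, hbz, h0]
    norm_num
  · have hR : (a : ℝ) * ((a : ℝ) - 1) + (b : ℝ) * ((b : ℝ) - 1)
        ≤ (n : ℝ) * ((n : ℝ) - 1) := by
      rw [← cast_mul_pred, ← cast_mul_pred, ← cast_mul_pred, ← Nat.cast_add]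
      exact_mod_cast hnat
    have hN : (1 : ℝ) ≤ (n : ℝ) := by exact_mod_cast hpos
    have hs : Real.sqrt 2 * Real.sqrt 2 = 2 := Real.mul_self_sqrt (by norm_num)
    have hsp : (0 : ℝ) ≤ Real.sqrt 2 := Real.sqrt_nonneg 2
    have hA : (0 : ℝ) ≤ (a : ℝ) := Nat.cast_nonneg a
    have hB : (0 : ℝ) ≤ (b : ℝ) := Nat.cast_nonneg b
    have hkey : ((a : ℝ) + (b : ℝ) - 1) ^ 2 ≤ 2 * (n : ℝ) ^ 2 - 1 := by
      nlinarith [sq_nonneg ((a : ℝ) - (b : ℝ))]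
    have hlt : (a : ℝ) + (b : ℝ) - 1 < Real.sqrt 2 * (n : ℝ) := by
      by_contra hcon
      push_neg at hcon
      have h4 : (Real.sqrt 2 * (n : ℝ)) ^ 2 ≤ ((a : ℝ) + (b : ℝ) - 1) ^ 2 :=
        pow_le_pow_left₀ (mul_nonneg hsp (by linarith)) hcon 2
      nlinarith
    linarith
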